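/- For any instance of the charging game (any number T of time steps) and any uniform price profile (p_t = c for all t and some c∈ℝ), every admissible strategy profile is a Nash equilibrium; in particular a Nash equilibrium exists for every instance under uniform prices. -/
import Mathlib


/-!
Formalization of the charging game on capacitated energy networks.

An instance consists of a finite directed host graph `H = (V, E)`, `T` time steps
(with per-time-step edge capacities `κE` and demands `d`), and a finite set `B` of
battery agents, each located at a node `loc b`, with battery edges `(b_t, b_{t+1})`
of capacity `κB b t`.
-/

structure ChargingGame where
  /-- households/vertices of the host graph -/
  V : Type
  fintypeV : Fintype V
  decV : DecidableEq V
  /-- number of time steps (time steps are indexed by `Fin T`) -/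
  T : ℕ
  T_pos : 0 < T
  /-- directed edges (power lines) of the host graph -/
  E : Finset (V × V)
  /-- capacity of (the copy of) edge `e` in time step `t` -/
  κE : Fin T → V × V → ℝ
  κE_nonneg : ∀ t e, 0 ≤ κE t e
  /-- demand/supply of node `v` in time step `t` (positive = supply, negative = demand) -/
  d : Fin T → V → ℝ
  /-- the battery agents -/
  B : Type
  fintypeB : Fintype B
  decB : DecidableEq B
  /-- the location of agent `b` -/
  loc : B → V
  /-- capacity of the battery edge `(b_t, b_{t+1})` (only `t` with `t+1 < T` is relevant) -/
  κB : B → Fin T → ℝ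
  κB_nonneg : ∀ b t, 0 ≤ κB b t

attribute [instance] ChargingGame.fintypeV ChargingGame.decV
attribute [instance] ChargingGame.fintypeB ChargingGame.decB

namespace ChargingGame

variable (G : ChargingGame)

/-- Nodes of the time-expanded energy network graph `G`:
grid nodes `(t, v)`, battery nodes `(t, b)`, and `false` = source `x`, `true` = sink `y`. -/
abbrev Node : Type := (Fin G.T × G.V) ⊕ ((Fin G.T × G.B) ⊕ Bool)

/-- the source `x` -/
abbrev source : G.Node := Sum.inr (Sum.inr false)

/-- the sink `y` -/
abbrev sink : G.Node := Sum.inr (Sum.inr true)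

/-- the copy of household node `v` in time step `t` -/
abbrev gridNode (t : Fin G.T) (v : G.V) : G.Node := Sum.inl (t, v)

/-- the battery node `b_t` of agent `b` in time step `t` -/
abbrev batNode (t : Fin G.T) (b : G.B) : G.Node := Sum.inr (Sum.inl (t, b))

/-- The capacities of the graph `G_s` induced by a strategy profile
`s : B → Fin T → ℝ` (`s b t > 0` means agent `b` charges `s b t` in step `t`,
`s b t < 0` means she discharges `-(s b t)`).  Non-edges have capacity `0`. -/
def cap (s : G.B → Fin G.T → ℝ) : G.Node → G.Node → ℝ
  | Sum.inl (t, v), Sum.inl (t', v') =>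
      if t = t' ∧ (v, v') ∈ G.E then G.κE t (v, v') else 0
  | Sum.inl (t, v), Sum.inr (Sum.inl (t', b)) =>
      if t = t' ∧ G.loc b = v then max 0 (s b t') else 0
  | Sum.inr (Sum.inl (t, b)), Sum.inl (t', v) =>
      if t = t' ∧ G.loc b = v then max 0 (-(s b t)) else 0
  | Sum.inr (Sum.inl (t, b)), Sum.inr (Sum.inl (t', b')) =>
      if b = b' ∧ (t' : ℕ) = (t : ℕ) + 1 then G.κB b t else 0
  | Sum.inr (Sum.inr false), Sum.inl (t, v) => max 0 (G.d t v)
  | Sum.inl (t, v), Sum.inr (Sum.inr true) => max 0 (-(G.d t v))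
  | _, _ => 0

/-- A feasible flow on the node set of `G` with capacities `c`. -/
structure IsFlow (c : G.Node → G.Node → ℝ) (f : G.Node → G.Node → ℝ) : Prop where
  nonneg : ∀ u v, 0 ≤ f u v
  le_cap : ∀ u v, f u v ≤ c u v
  conserve : ∀ n, n ≠ G.source → n ≠ G.sink → (∑ u, f u n) = (∑ w, f n w)

/-- The value `|f|` of a flow: total flow leaving the source. -/
def value (f : G.Node → G.Node → ℝ) : ℝ := ∑ v, f G.source v

/-- `f` is a maximum flow for capacities `c`. -/
def IsMaxFlow (c : G.Node → G.Node → ℝ) (f : G.Node → G.Node → ℝ) : Prop :=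
  G.IsFlow c f ∧ ∀ g, G.IsFlow c g → G.value g ≤ G.value f

/-- Agent `b`'s strategy is admissible for the profile `s`:
every maximum flow in `G_s` saturates both transaction edges of `b` in every time step. -/
def Admissible (s : G.B → Fin G.T → ℝ) (b : G.B) : Prop :=
  ∀ f, G.IsMaxFlow (G.cap s) f → ∀ t : Fin G.T,
    f (G.gridNode t (G.loc b)) (G.batNode t b)
        = G.cap s (G.gridNode t (G.loc b)) (G.batNode t b) ∧
    f (G.batNode t b) (G.gridNode t (G.loc b))
        = G.cap s (G.batNode t b) (G.gridNode t (G.loc b))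

/-- A valid strategy of agent `b`: all prefix sums lie between `0` and the battery
capacity (for every `t` with `t + 1 < T`, i.e. `t ∈ [T-1]` in 1-based indexing). -/
def ValidStrategy (b : G.B) (sb : Fin G.T → ℝ) : Prop :=
  ∀ t : Fin G.T, (t : ℕ) + 1 < G.T →
    0 ≤ (∑ z ∈ Finset.Iic t, sb z) ∧ (∑ z ∈ Finset.Iic t, sb z) ≤ G.κB b t

/-- A valid strategy profile. -/
def ValidProfile (s : G.B → Fin G.T → ℝ) : Prop := ∀ b, G.ValidStrategy b (s b)

open scoped Classical in
/-- The utility of agent `b` under price profile `p` and strategy profile `s`: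
`-∑ t, s b t * p t` if `b`'s strategy is admissible, and `-∞` otherwise. -/
noncomputable def utility (p : Fin G.T → ℝ) (s : G.B → Fin G.T → ℝ) (b : G.B) : EReal :=
  if G.Admissible s b then ((-(∑ t, s b t * p t) : ℝ) : EReal) else ⊥

/-- `s` is a (pure) Nash equilibrium for the price profile `p`. -/
def IsNash (p : Fin G.T → ℝ) (s : G.B → Fin G.T → ℝ) : Prop :=
  G.ValidProfile s ∧
  ∀ b (sb' : Fin G.T → ℝ), G.ValidStrategy b sb' →
    ¬ G.utility p s b < G.utility p (Function.update s b sb') b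

/-- `s` is a `k`-strong equilibrium for the price profile `p`: no nonempty coalition of
at most `k` agents has a joint deviation strictly improving the utility of each member. -/
def IsStrongEq (k : ℕ) (p : Fin G.T → ℝ) (s : G.B → Fin G.T → ℝ) : Prop :=
  G.ValidProfile s ∧
  ∀ C : Finset G.B, C.Nonempty → C.card ≤ k →
    ∀ s' : G.B → Fin G.T → ℝ, (∀ b, G.ValidStrategy b (s' b)) →
      (∀ b ∉ C, s' b = s b) →
      ¬ ∀ b ∈ C, G.utility p s b < G.utility p s' b

/-- The welfare `W(s)` of a strategy profile `s`: the value of a maximum flow in `G_s`. -/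
noncomputable def welfare (s : G.B → Fin G.T → ℝ) : ℝ :=
  sSup {r | ∃ f, G.IsFlow (G.cap s) f ∧ G.value f = r}

/-- The maximum welfare over all (valid) strategy profiles. -/
noncomputable def optWelfare : ℝ :=
  sSup {r | ∃ s, G.ValidProfile s ∧ G.welfare s = r}

end ChargingGame

namespace ChargingGame

variable (G : ChargingGame)

lemma cap_nonneg (s : G.B → Fin G.T → ℝ) (u v : G.Node) : 0 ≤ G.cap s u v := by
  rcases u with ⟨t, v0⟩ | ⟨⟨t, b⟩ | (_ | _)⟩ <;>
    rcases v with ⟨t', v1⟩ | ⟨⟨t', b'⟩ | (_ | _)⟩ <;>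
    simp only [ChargingGame.cap] <;>
    first
      | (split_ifs <;>
          first
            | exact le_refl 0
            | exact G.κE_nonneg _ _
            | exact le_max_left 0 _
            | exact G.κB_nonneg _ _)
      | exact le_refl 0
      | exact le_max_left 0 _

lemma exists_maxflow (s : G.B → Fin G.T → ℝ) : ∃ f, G.IsMaxFlow (G.cap s) f := by
  classical
  set K : Set (G.Node → G.Node → ℝ) := {f | G.IsFlow (G.cap s) f} with hKdef
  have hcont : ∀ (u v : G.Node), Continuous fun f : G.Node → G.Node → ℝ => f u v :=
    fun u v => (continuous_apply v).comp (continuous_apply u)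
  have hKclosed : IsClosed K := by
    have : K = (⋂ u, ⋂ v, {f : G.Node → G.Node → ℝ | f u v ∈ Set.Icc 0 (G.cap s u v)}) ∩
        ⋂ n : {n : G.Node // n ≠ G.source ∧ n ≠ G.sink},
          {f : G.Node → G.Node → ℝ | (∑ u, f u n) = (∑ w, f (n : G.Node) w)} := by
      ext f
      simp only [hKdef, Set.mem_setOf_eq, Set.mem_inter_iff, Set.mem_iInter,
        Set.mem_Icc, Subtype.forall]
      constructor
      · rintro ⟨h1, h2, h3⟩
        exact ⟨fun u v => ⟨h1 u v, h2 u v⟩, fun n hn => h3 n hn.1 hn.2⟩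
      · rintro ⟨h1, h2⟩
        exact ⟨fun u v => (h1 u v).1, fun u v => (h1 u v).2, fun n hn hn' => h2 n ⟨hn, hn'⟩⟩
    rw [this]
    refine IsClosed.inter (isClosed_iInter fun u => isClosed_iInter fun v => ?_)
      (isClosed_iInter fun n => ?_)
    · exact IsClosed.preimage (hcont u v) isClosed_Icc
    · exact isClosed_eq (continuous_finset_sum _ fun u _ => hcont u n)
        (continuous_finset_sum _ fun w _ => hcont (n : G.Node) w)
  have hsub : K ⊆ Set.Icc (0 : G.Node → G.Node → ℝ) (G.cap s) := by
    intro f hf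
    exact ⟨fun u => fun v => hf.nonneg u v, fun u => fun v => hf.le_cap u v⟩
  have hKcompact : IsCompact K :=
    IsCompact.of_isClosed_subset isCompact_Icc hKclosed hsub
  have hKne : K.Nonempty := by
    refine ⟨fun _ _ => 0, ?_, ?_, ?_⟩
    · intro u v; exact le_refl 0
    · intro u v; exact G.cap_nonneg s u v
    · intro n _ _; simp
  obtain ⟨f, hfK, hfmax⟩ := hKcompact.exists_isMaxOn hKne
    ((continuous_finset_sum _ fun v _ => hcont G.source v).continuousOn)
  exact ⟨f, hfK, fun g hg => hfmax hg⟩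

/-- If a flow saturates all transaction edges of battery `b`, then the strategy of `b`
sums to zero (flow conservation along the battery chain). -/
lemma sum_eq_zero_of_saturated (s : G.B → Fin G.T → ℝ) (b : G.B)
    (f : G.Node → G.Node → ℝ) (hf : G.IsFlow (G.cap s) f)
    (hsat : ∀ t : Fin G.T,
      f (G.gridNode t (G.loc b)) (G.batNode t b) = max 0 (s b t) ∧
      f (G.batNode t b) (G.gridNode t (G.loc b)) = max 0 (-(s b t))) :
    (∑ t, s b t) = 0 := by
  classical
  have hzero : ∀ u v, G.cap s u v = 0 → f u v = 0 := fun u v h =>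
    le_antisymm (h ▸ hf.le_cap u v) (hf.nonneg u v)
  have hcons : ∀ t : Fin G.T,
      (∑ u, f u (G.batNode t b)) = ∑ w, f (G.batNode t b) w := by
    intro t
    refine hf.conserve _ ?_ ?_ <;> simp [ChargingGame.batNode, ChargingGame.source,
      ChargingGame.sink]
  have hIn : ∀ t : Fin G.T,
      (∑ u, f u (G.batNode t b))
        = max 0 (s b t) + ∑ t' : Fin G.T, f (G.batNode t' b) (G.batNode t b) := by
    intro t
    rw [Fintype.sum_sum_type, Fintype.sum_sum_type]
    have h1 : (∑ x : Fin G.T × G.V, f (Sum.inl x) (G.batNode t b)) = max 0 (s b t) := by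
      rw [← (hsat t).1]
      refine Finset.sum_eq_single (t, G.loc b) ?_ (by simp)
      intro x _ hx
      refine hzero _ _ ?_
      obtain ⟨t', v⟩ := x
      simp only [ChargingGame.cap, ite_eq_right_iff, and_imp]
      intro ht hv
      exact absurd (by subst ht; subst hv; rfl) hx
    have h2 : (∑ x : Fin G.T × G.B, f (Sum.inr (Sum.inl x)) (G.batNode t b))
        = ∑ t' : Fin G.T, f (G.batNode t' b) (G.batNode t b) := by
      rw [Fintype.sum_prod_type]
      refine Finset.sum_congr rfl fun t' _ => ?_
      refine Finset.sum_eq_single b ?_ (by simp)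
      intro b' _ hb'
      refine hzero _ _ ?_
      simp only [ChargingGame.cap, ite_eq_right_iff, and_imp]
      intro hb _
      exact absurd hb hb'
    have h3 : (∑ x : Bool, f (Sum.inr (Sum.inr x)) (G.batNode t b)) = 0 := by
      refine Finset.sum_eq_zero fun x _ => hzero _ _ ?_
      cases x <;> rfl
    rw [h1, h2, h3, add_zero]
  have hOut : ∀ t : Fin G.T,
      (∑ w, f (G.batNode t b) w)
        = max 0 (-(s b t)) + ∑ t' : Fin G.T, f (G.batNode t b) (G.batNode t' b) := by
    intro t
    rw [Fintype.sum_sum_type, Fintype.sum_sum_type]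
    have h1 : (∑ x : Fin G.T × G.V, f (G.batNode t b) (Sum.inl x)) = max 0 (-(s b t)) := by
      rw [← (hsat t).2]
      refine Finset.sum_eq_single (t, G.loc b) ?_ (by simp)
      intro x _ hx
      refine hzero _ _ ?_
      obtain ⟨t', v⟩ := x
      simp only [ChargingGame.cap, ite_eq_right_iff, and_imp]
      intro ht hv
      exact absurd (by subst ht; subst hv; rfl) hx
    have h2 : (∑ x : Fin G.T × G.B, f (G.batNode t b) (Sum.inr (Sum.inl x)))
        = ∑ t' : Fin G.T, f (G.batNode t b) (G.batNode t' b) := by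
      rw [Fintype.sum_prod_type]
      refine Finset.sum_congr rfl fun t' _ => ?_
      refine Finset.sum_eq_single b ?_ (by simp)
      intro b' _ hb'
      refine hzero _ _ ?_
      simp only [ChargingGame.cap, ite_eq_right_iff, and_imp]
      intro hb _
      exact absurd hb.symm hb'
    have h3 : (∑ x : Bool, f (G.batNode t b) (Sum.inr (Sum.inr x))) = 0 := by
      refine Finset.sum_eq_zero fun x _ => hzero _ _ ?_
      cases x <;> rfl
    rw [h1, h2, h3, add_zero]
  have hsum : (∑ t, (max 0 (s b t)
        + ∑ t' : Fin G.T, f (G.batNode t' b) (G.batNode t b)))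
      = ∑ t, (max 0 (-(s b t)) + ∑ t' : Fin G.T, f (G.batNode t b) (G.batNode t' b)) := by
    calc (∑ t, (max 0 (s b t) + ∑ t' : Fin G.T, f (G.batNode t' b) (G.batNode t b)))
        = ∑ t, ∑ u, f u (G.batNode t b) := by
          refine Finset.sum_congr rfl fun t _ => (hIn t).symm
      _ = ∑ t, ∑ w, f (G.batNode t b) w := by
          refine Finset.sum_congr rfl fun t _ => hcons t
      _ = _ := Finset.sum_congr rfl fun t _ => hOut t
  rw [Finset.sum_add_distrib, Finset.sum_add_distrib, Finset.sum_comm] at hsum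
  have key : (∑ t, max 0 (s b t)) = ∑ t, max 0 (-(s b t)) := by linarith
  have : (∑ t, s b t) = ∑ t, (max 0 (s b t) - max 0 (-(s b t))) := by
    refine Finset.sum_congr rfl fun t _ => ?_
    rcases le_total 0 (s b t) with h | h
    · rw [max_eq_right h, max_eq_left (by linarith)]; ring
    · rw [max_eq_left h, max_eq_right (by linarith)]; ring
  rw [this, Finset.sum_sub_distrib, key, sub_self]

lemma admissible_sum_zero (s : G.B → Fin G.T → ℝ) (b : G.B)
    (h : G.Admissible s b) : (∑ t, s b t) = 0 := by
  obtain ⟨f, hf⟩ := G.exists_maxflow s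
  refine G.sum_eq_zero_of_saturated s b f hf.1 fun t => ?_
  obtain ⟨h1, h2⟩ := h f hf t
  constructor
  · rw [h1]; simp [ChargingGame.cap]
  · rw [h2]; simp [ChargingGame.cap]

lemma admissible_zero (b : G.B) : G.Admissible (fun _ _ => 0) b := by
  intro f hf t
  have hc1 : G.cap (fun _ _ => 0) (G.gridNode t (G.loc b)) (G.batNode t b) = 0 := by
    simp [ChargingGame.cap]
  have hc2 : G.cap (fun _ _ => 0) (G.batNode t b) (G.gridNode t (G.loc b)) = 0 := by
    simp [ChargingGame.cap]
  constructor
  · rw [hc1]; exact le_antisymm (hc1 ▸ hf.1.le_cap _ _) (hf.1.nonneg _ _)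
  · rw [hc2]; exact le_antisymm (hc2 ▸ hf.1.le_cap _ _) (hf.1.nonneg _ _)

end ChargingGame

/-- For any instance (any number of time steps) and any uniform price
profile, every admissible (valid) strategy profile is a Nash equilibrium; in particular
a Nash equilibrium exists for every instance under uniform prices. -/
theorem uniform_prices_admissible_is_nash (G : ChargingGame) (c : ℝ) :
    (∀ s : G.B → Fin G.T → ℝ, G.ValidProfile s → (∀ b, G.Admissible s b) →
      G.IsNash (fun _ => c) s) ∧
    ∃ s : G.B → Fin G.T → ℝ, G.IsNash (fun _ => c) s := by
  classical
  have main : ∀ s : G.B → Fin G.T → ℝ, G.ValidProfile s → (∀ b, G.Admissible s b) →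
      G.IsNash (fun _ => c) s := by
    intro s hvalid hadm
    refine ⟨hvalid, fun b sb' _ => ?_⟩
    have hus : G.utility (fun _ => c) s b = ((0 : ℝ) : EReal) := by
      rw [ChargingGame.utility, if_pos (hadm b)]
      have : (∑ t, s b t * c) = (∑ t, s b t) * c := by rw [Finset.sum_mul]
      rw [this, G.admissible_sum_zero s b (hadm b), zero_mul, neg_zero]
    rw [hus]
    by_cases hadm' : G.Admissible (Function.update s b sb') b
    · have hud : G.utility (fun _ => c) (Function.update s b sb') b = ((0 : ℝ) : EReal) := by
        rw [ChargingGame.utility, if_pos hadm']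
        have : (∑ t, Function.update s b sb' b t * c)
            = (∑ t, Function.update s b sb' b t) * c := by rw [Finset.sum_mul]
        rw [this, G.admissible_sum_zero _ b hadm', zero_mul, neg_zero]
      rw [hud]
      exact lt_irrefl _
    · rw [ChargingGame.utility, if_neg hadm']
      exact not_lt.mpr bot_le
  refine ⟨main, fun _ _ => 0, main _ ?_ G.admissible_zero⟩
  intro b t _
  simp [G.κB_nonneg b t]
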